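/- Let C be positive definite, K, K̃ with K̃^T C^{-1} K invertible, and R arbitrary. For every K' in R^{d_in×N} such that K̃^T C^{-1} K' is invertible, there exists a residual matrix R' such that the camouflaged MEMIT update constructed from (K', K̃, R') equals the camouflaged MEMIT update constructed from (K, K̃, R). Explicitly, R' = R (I + K^T C^{-1} K)^{-1} K^T C^{-1} K (K̃^T C^{-1} K)^{-1} (K̃^T C^{-1} K') (K'^T C^{-1} K')^{-1} (I + K'^T C^{-1} K') works, where the camouflaged update from (K, K̃, R) is R (I + K^T C^{-1} K)^{-1} K^T C^{-1} K (K̃^T C^{-1} K)^{-1} K̃^T C^{-1}. -/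

import Mathlib

open Matrix

lemma aux_posdef {din N : ℕ} (C : Matrix (Fin din) (Fin din) ℝ) (hC : C.PosDef)
    (Ktil K' : Matrix (Fin din) (Fin N) ℝ)
    (h : IsUnit (Ktilᵀ * C⁻¹ * K').det) :
    (K'ᵀ * C⁻¹ * K').PosDef := by
  have hCi : C⁻¹.PosDef := hC.inv
  rw [posDef_iff_dotProduct_mulVec]
  constructor
  · have hH : C⁻¹ᵀ = C⁻¹ := by
      have := hCi.isHermitian
      rwa [IsHermitian, conjTranspose_eq_transpose_of_trivial] at this
    rw [IsHermitian, conjTranspose_eq_transpose_of_trivial, transpose_mul, transpose_mul,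
      transpose_transpose, hH, ← Matrix.mul_assoc]
  · intro x hx
    have hK'x : K' *ᵥ x ≠ 0 := by
      intro hy
      apply hx
      have hinj := Matrix.mulVec_injective_iff_isUnit.mpr
        ((Matrix.isUnit_iff_isUnit_det _).mpr h)
      apply hinj
      rw [show (Ktilᵀ * C⁻¹ * K') *ᵥ x = (Ktilᵀ * C⁻¹) *ᵥ (K' *ᵥ x) by
        rw [mulVec_mulVec]]
      simp [hy]
    have key : star x ⬝ᵥ ((K'ᵀ * C⁻¹ * K') *ᵥ x)
        = star (K' *ᵥ x) ⬝ᵥ (C⁻¹ *ᵥ (K' *ᵥ x)) := by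
      simp only [star_trivial]
      rw [← mulVec_mulVec, ← mulVec_mulVec, dotProduct_mulVec, vecMul_transpose]
    rw [key]
    exact hCi.dotProduct_mulVec_pos hK'x


/-- **Non-recoverability of the true key matrix under subspace camouflage
(MEMIT case).** Let `C` be positive definite, `K, K̃` with `K̃ᵀ C⁻¹ K`
invertible, and `R` arbitrary. Writing the camouflaged update built from
`(K, K̃, R)` as
`Δ(K, K̃, R) = R (I + Kᵀ C⁻¹ K)⁻¹ Kᵀ C⁻¹ K (K̃ᵀ C⁻¹ K)⁻¹ K̃ᵀ C⁻¹`,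
for every `K' : ℝ^{d_in×N}` with `K̃ᵀ C⁻¹ K'` invertible there exists a
residual matrix `R'` — explicitly
`R' = R (I + Kᵀ C⁻¹ K)⁻¹ Kᵀ C⁻¹ K (K̃ᵀ C⁻¹ K)⁻¹ (K̃ᵀ C⁻¹ K') (K'ᵀ C⁻¹ K')⁻¹ (I + K'ᵀ C⁻¹ K')` —
such that `Δ(K', K̃, R') = Δ(K, K̃, R)`. -/
theorem memit_defense_key_nonrecoverable {din dout N : ℕ}
    (C : Matrix (Fin din) (Fin din) ℝ) (hC : C.PosDef)
    (K Ktil : Matrix (Fin din) (Fin N) ℝ)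
    (hinv : IsUnit (Ktilᵀ * C⁻¹ * K).det)
    (R : Matrix (Fin dout) (Fin N) ℝ)
    (Δ : Matrix (Fin din) (Fin N) ℝ → Matrix (Fin din) (Fin N) ℝ →
      Matrix (Fin dout) (Fin N) ℝ → Matrix (Fin dout) (Fin din) ℝ)
    (hΔ : ∀ A B D, Δ A B D =
      D * (1 + Aᵀ * C⁻¹ * A)⁻¹ * (Aᵀ * C⁻¹ * A) * (Bᵀ * C⁻¹ * A)⁻¹ * Bᵀ * C⁻¹) :
    ∀ K' : Matrix (Fin din) (Fin N) ℝ, IsUnit (Ktilᵀ * C⁻¹ * K').det →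
      ∃ R' : Matrix (Fin dout) (Fin N) ℝ,
        R' = R * (1 + Kᵀ * C⁻¹ * K)⁻¹ * (Kᵀ * C⁻¹ * K) * (Ktilᵀ * C⁻¹ * K)⁻¹ *
          (Ktilᵀ * C⁻¹ * K') * (K'ᵀ * C⁻¹ * K')⁻¹ * (1 + K'ᵀ * C⁻¹ * K') ∧
        Δ K' Ktil R' = Δ K Ktil R := by
  intro K' hinv'
  set M' := K'ᵀ * C⁻¹ * K' with hM'def
  have hM' : M'.PosDef := aux_posdef C hC Ktil K' hinv'
  have h1M' : (1 + M').PosDef := Matrix.PosDef.add_posSemidef Matrix.PosDef.one hM'.posSemidef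
  have hM'u : IsUnit M'.det := hM'.det_pos.ne'.isUnit
  have h1M'u : IsUnit (1 + M').det := h1M'.det_pos.ne'.isUnit
  refine ⟨_, rfl, ?_⟩
  rw [hΔ, hΔ]
  set X := R * (1 + Kᵀ * C⁻¹ * K)⁻¹ * (Kᵀ * C⁻¹ * K) * (Ktilᵀ * C⁻¹ * K)⁻¹ with hX
  have key : X * (Ktilᵀ * C⁻¹ * K') * M'⁻¹ * (1 + M') * (1 + M')⁻¹ * M' * (Ktilᵀ * C⁻¹ * K')⁻¹
      = X := by
    rw [Matrix.mul_assoc _ (1 + M') (1 + M')⁻¹, Matrix.mul_nonsing_inv _ h1M'u,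
      Matrix.mul_one, Matrix.mul_assoc _ M'⁻¹ M', Matrix.nonsing_inv_mul _ hM'u,
      Matrix.mul_one, Matrix.mul_assoc, Matrix.mul_nonsing_inv _ hinv', Matrix.mul_one]
  calc X * (Ktilᵀ * C⁻¹ * K') * M'⁻¹ * (1 + M') * (1 + M')⁻¹ * M' * (Ktilᵀ * C⁻¹ * K')⁻¹
        * Ktilᵀ * C⁻¹
      = X * Ktilᵀ * C⁻¹ := by rw [key]
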